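/- arXiv:1703.03908 — 2 statements merged into one kernel-verified Lean document; each statement's English description precedes it below -/
import Mathlib

section
/- Let B : ℝ → Mat(2n,ℝ) be continuous with B(t) symmetric for every t ∈ ℝ, and let v, w : ℝ → ℝ^{2n} be differentiable solutions of z'(t) = J B(t) z(t). If v(t) → 0 and w(t) → 0 as t → +∞ (or, alternatively, as t → −∞), then ω(v(τ), w(τ)) = 0 for every τ ∈ ℝ. In particular, for every τ ∈ ℝ the stable subspace E^s(τ) and the unstable subspace E^u(τ) of the system z' = J B(t) z are isotropic subspaces of (ℝ^{2n}, ω). -/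
open Matrix Filter Topology

/-- The standard complex structure `J = [[0, -Iₙ],[Iₙ, 0]]` on `ℝ^{2n}`. -/
noncomputable def Jmat (n : ℕ) : Matrix (Fin (2*n)) (Fin (2*n)) ℝ :=
  Matrix.reindex (finSumFinEquiv.trans (finCongr (two_mul n).symm))
    (finSumFinEquiv.trans (finCongr (two_mul n).symm))
    (Matrix.fromBlocks 0 (-1) 1 0)

/-- The standard symplectic form `ω(u,v) = ⟨Ju, v⟩` on `ℝ^{2n}`. -/
noncomputable def symplForm (n : ℕ) (u v : Fin (2*n) → ℝ) : ℝ :=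
  (Jmat n) *ᵥ u ⬝ᵥ v

/-- The stable subspace `E^s(τ)` of `z' = S(t) z`, described through the fundamental
solution `γ τ` normalized by `γ τ τ = 1`. -/
def stableSet {m : ℕ} (γ : ℝ → ℝ → Matrix (Fin m) (Fin m) ℝ) (τ : ℝ) :
    Set (Fin m → ℝ) :=
  {v | Tendsto (fun t => γ τ t *ᵥ v) atTop (nhds 0)}

/-- The unstable subspace `E^u(τ)` of `z' = S(t) z`. -/
def unstableSet {m : ℕ} (γ : ℝ → ℝ → Matrix (Fin m) (Fin m) ℝ) (τ : ℝ) :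
    Set (Fin m → ℝ) :=
  {v | Tendsto (fun t => γ τ t *ᵥ v) atBot (nhds 0)}

lemma Jmat_mul_Jmat (n : ℕ) : Jmat n * Jmat n = -1 := by
  simp only [Jmat, Matrix.reindex_apply, Matrix.submatrix_mul_equiv,
    Matrix.fromBlocks_multiply]
  have : (Matrix.fromBlocks (0*0 + (-1)*1) (0*(-1) + (-1)*0) (1*0 + 0*1) (1*(-1) + 0*0) :
      Matrix (Fin n ⊕ Fin n) (Fin n ⊕ Fin n) ℝ) = -1 := by
    simp [← Matrix.fromBlocks_one, Matrix.fromBlocks_neg]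
  rw [this]
  ext i j
  simp only [Matrix.submatrix_apply, Matrix.neg_apply, Matrix.one_apply]
  simp [Fin.ext_iff, Equiv.symm_apply_eq]

lemma Jmat_transpose (n : ℕ) : (Jmat n)ᵀ = -Jmat n := by
  simp only [Jmat, Matrix.reindex_apply, Matrix.transpose_submatrix,
    Matrix.fromBlocks_transpose]
  have h : (Matrix.fromBlocks (0:Matrix (Fin n) (Fin n) ℝ)ᵀ (1:Matrix (Fin n) (Fin n) ℝ)ᵀ
      (-1:Matrix (Fin n) (Fin n) ℝ)ᵀ (0:Matrix (Fin n) (Fin n) ℝ)ᵀ)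
      = -(Matrix.fromBlocks 0 (-1) 1 0) := by
    rw [Matrix.fromBlocks_neg]; simp
  rw [h]
  ext i j
  simp [Matrix.submatrix_apply, Matrix.neg_apply]

set_option maxHeartbeats 1000000 in
set_option maxHeartbeats 400000 in
lemma key (n : ℕ) (B : ℝ → Matrix (Fin (2*n)) (Fin (2*n)) ℝ)
    (hBsymm : ∀ t, (B t).IsSymm)
    (v w : ℝ → Fin (2*n) → ℝ)
    (hv : ∀ t, HasDerivAt v ((Jmat n * B t) *ᵥ v t) t)
    (hw : ∀ t, HasDerivAt w ((Jmat n * B t) *ᵥ w t) t)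
    (l : Filter ℝ) [l.NeBot]
    (hvl : Tendsto v l (nhds 0)) (hwl : Tendsto w l (nhds 0)) :
    ∀ τ : ℝ, symplForm n (v τ) (w τ) = 0 := by
  intro τ
  set f : ℝ → ℝ := fun t => symplForm n (v t) (w t) with hf
  have hderiv : ∀ t, HasDerivAt f 0 t := by
    intro t
    have hv' := hasDerivAt_pi.mp (hv t)
    have hw' := hasDerivAt_pi.mp (hw t)
    have h1 : HasDerivAt f
        ((Jmat n *ᵥ ((Jmat n * B t) *ᵥ v t)) ⬝ᵥ w t
          + (Jmat n *ᵥ v t) ⬝ᵥ ((Jmat n * B t) *ᵥ w t)) t := by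
      have h2 : HasDerivAt f
          (∑ i, ((∑ j, Jmat n i j * ((Jmat n * B t) *ᵥ v t) j) * w t i
            + (∑ j, Jmat n i j * v t j) * ((Jmat n * B t) *ᵥ w t) i)) t := by
        have hform : f = fun s => ∑ i, (∑ j, Jmat n i j * v s j) * w s i := by
          funext s
          simp only [hf, symplForm, Matrix.mulVec, dotProduct]
        rw [hform]
        apply HasDerivAt.fun_sum
        intro i _
        exact ((HasDerivAt.fun_sum (fun j _ => (hv' j).const_mul (Jmat n i j))).mul (hw' i))
      convert h2 using 1
      simp only [Matrix.mulVec, dotProduct, Finset.sum_add_distrib]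
    have e1 : Jmat n *ᵥ ((Jmat n * B t) *ᵥ v t) = -(B t *ᵥ v t) := by
      rw [Matrix.mulVec_mulVec, ← Matrix.mul_assoc, Jmat_mul_Jmat, Matrix.neg_mul,
        Matrix.one_mul, Matrix.neg_mulVec]
    have e2 : (Jmat n *ᵥ v t) ⬝ᵥ ((Jmat n * B t) *ᵥ w t) = (B t *ᵥ v t) ⬝ᵥ w t := by
      rw [Matrix.dotProduct_mulVec, Matrix.vecMul_mulVec]
      congr 1
      have hJ : (Jmat n)ᵀ * (Jmat n * B t) = B t := by
        rw [Jmat_transpose, ← Matrix.mul_assoc, Matrix.neg_mul, Jmat_mul_Jmat,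
          neg_neg, Matrix.one_mul]
      rw [hJ, ← (hBsymm t).eq, Matrix.vecMul_transpose, (hBsymm t).eq]
    rw [e1, e2] at h1
    simpa using h1
  have hconst : ∀ s, f s = f τ :=
    fun s => is_const_of_deriv_eq_zero (fun t => (hderiv t).differentiableAt)
      (fun t => (hderiv t).deriv) s τ
  have hv0 : ∀ j, Tendsto (fun t => v t j) l (nhds 0) := by
    intro j; simpa using tendsto_pi_nhds.mp hvl j
  have hw0 : ∀ i, Tendsto (fun t => w t i) l (nhds 0) := by
    intro i; simpa using tendsto_pi_nhds.mp hwl i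
  have hlim : Tendsto f l (nhds 0) := by
    have hform2 : f = fun t => ∑ i, (∑ j, Jmat n i j * v t j) * w t i := by
      funext s; simp only [hf, symplForm, Matrix.mulVec, dotProduct]
    rw [hform2]
    have hsum := tendsto_finset_sum (Finset.univ : Finset (Fin (2*n))) (fun i _ =>
      ((tendsto_finset_sum (Finset.univ : Finset (Fin (2*n)))
        (fun j _ => (hv0 j).const_mul (Jmat n i j))).mul (hw0 i)))
    simpa using hsum
  have hlim2 : Tendsto f l (nhds (f τ)) := by
    have : f = fun _ => f τ := funext hconst
    rw [this]; exact tendsto_const_nhds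
  exact tendsto_nhds_unique hlim2 hlim

/-- If `v, w` are solutions of `z' = J B(t) z` which both tend to `0` as `t → +∞`
(or alternatively both as `t → -∞`), then `ω(v τ, w τ) = 0` for every `τ`.  In particular,
the stable and unstable subspaces `E^s(τ)`, `E^u(τ)` are isotropic subspaces of
`(ℝ^{2n}, ω)` for every `τ`. -/
theorem stmt1 (n : ℕ) (B : ℝ → Matrix (Fin (2*n)) (Fin (2*n)) ℝ)
    (hBcont : Continuous B) (hBsymm : ∀ t, (B t).IsSymm) :
    (∀ v w : ℝ → Fin (2*n) → ℝ,
      (∀ t, HasDerivAt v ((Jmat n * B t) *ᵥ v t) t) →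
      (∀ t, HasDerivAt w ((Jmat n * B t) *ᵥ w t) t) →
      ((Tendsto v atTop (nhds 0) ∧ Tendsto w atTop (nhds 0)) ∨
       (Tendsto v atBot (nhds 0) ∧ Tendsto w atBot (nhds 0))) →
      ∀ τ : ℝ, symplForm n (v τ) (w τ) = 0) ∧
    (∀ γ : ℝ → ℝ → Matrix (Fin (2*n)) (Fin (2*n)) ℝ,
      (∀ τ, γ τ τ = 1) →
      (∀ τ (u : Fin (2*n) → ℝ) t,
        HasDerivAt (fun s => γ τ s *ᵥ u) ((Jmat n * B t) *ᵥ (γ τ t *ᵥ u)) t) →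
      ∀ τ : ℝ,
        (∀ u ∈ stableSet γ τ, ∀ w ∈ stableSet γ τ, symplForm n u w = 0) ∧
        (∀ u ∈ unstableSet γ τ, ∀ w ∈ unstableSet γ τ, symplForm n u w = 0)) := by
  constructor
  · intro v w hv hw hl τ
    rcases hl with ⟨h1, h2⟩ | ⟨h1, h2⟩
    · exact key n B hBsymm v w hv hw atTop h1 h2 τ
    · exact key n B hBsymm v w hv hw atBot h1 h2 τ
  · intro γ hγ1 hγd τ
    constructor
    · intro u hu w hw
      have := key n B hBsymm (fun t => γ τ t *ᵥ u) (fun t => γ τ t *ᵥ w)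
        (hγd τ u) (hγd τ w) atTop hu hw τ
      simpa [hγ1 τ] using this
    · intro u hu w hw
      have := key n B hBsymm (fun t => γ τ t *ᵥ u) (fun t => γ τ t *ᵥ w)
        (hγd τ u) (hγd τ w) atBot hu hw τ
      simpa [hγ1 τ] using this
end

section
/- Let S : ℝ → Mat(2n,ℝ) be continuous with hyperbolic uniform limits S(±∞) at ±∞ (hypothesis (H1) for a single system). Then for every t₁ < t₂ the space of solutions z : [t₁,t₂] → ℝ^{2n} of z'(t) = S(t) z(t) satisfying the boundary conditions z(t₁) ∈ E^u(t₁) and z(t₂) ∈ E^s(t₂) has dimension equal to the dimension of the space of solutions z : ℝ → ℝ^{2n} of z' = S(t)z with z(t) → 0 as t → ±∞; both dimensions equal dim(E^u(0) ∩ E^s(0)). In particular, the restricted boundary value problem on [t₁,t₂] is degenerate if and only if the problem on the whole line is degenerate. -/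
open Matrix Filter Topology

/-- Solutions of the boundary value problem `z' = S(t) z` on `[t₁,t₂]`, `z(t₁) ∈ E₁`,
`z(t₂) ∈ E₂`, regarded as functions on `[t₁,t₂]` admitting a differentiable extension. -/
def bvpSolutions {m : ℕ} (S : ℝ → Matrix (Fin m) (Fin m) ℝ) (t₁ t₂ : ℝ)
    (E₁ E₂ : Submodule ℝ (Fin m → ℝ)) :
    Submodule ℝ (Set.Icc t₁ t₂ → (Fin m → ℝ)) where
  carrier := {z | ∃ Z : ℝ → Fin m → ℝ,
      (∀ s : Set.Icc t₁ t₂, Z s = z s) ∧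
      (∀ t ∈ Set.Icc t₁ t₂, HasDerivWithinAt Z (S t *ᵥ Z t) (Set.Icc t₁ t₂) t) ∧
      Z t₁ ∈ E₁ ∧ Z t₂ ∈ E₂}
  add_mem' := by
    rintro a b ⟨Za, haeq, hade, ha1, ha2⟩ ⟨Zb, hbeq, hbde, hb1, hb2⟩
    refine ⟨Za + Zb, fun s => by simp [haeq s, hbeq s], fun t ht => ?_, ?_, ?_⟩
    · simpa [Matrix.mulVec_add] using (hade t ht).add (hbde t ht)
    · simpa using E₁.add_mem ha1 hb1
    · simpa using E₂.add_mem ha2 hb2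
  zero_mem' := by
    refine ⟨0, fun s => rfl, fun t ht => ?_, E₁.zero_mem, E₂.zero_mem⟩
    show HasDerivWithinAt (fun _ => (0 : Fin m → ℝ)) (S t *ᵥ 0) (Set.Icc t₁ t₂) t
    rw [Matrix.mulVec_zero]
    exact hasDerivWithinAt_const t (Set.Icc t₁ t₂) (0 : Fin m → ℝ)
  smul_mem' := by
    rintro c a ⟨Za, haeq, hade, ha1, ha2⟩
    refine ⟨c • Za, fun s => by simp [haeq s], fun t ht => ?_, ?_, ?_⟩
    · simpa [Matrix.mulVec_smul] using (hade t ht).const_smul c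
    · simpa using E₁.smul_mem c ha1
    · simpa using E₂.smul_mem c ha2

/-- Solutions of `z' = S(t) z` on the whole real line decaying at both ends. -/
def lineSolutions {m : ℕ} (S : ℝ → Matrix (Fin m) (Fin m) ℝ) :
    Submodule ℝ (ℝ → Fin m → ℝ) where
  carrier := {z | (∀ t, HasDerivAt z (S t *ᵥ z t) t) ∧
      Tendsto z atTop (nhds 0) ∧ Tendsto z atBot (nhds 0)}
  add_mem' := by
    rintro a b ⟨hade, hat, hab⟩ ⟨hbde, hbt, hbb⟩
    refine ⟨fun t => ?_, ?_, ?_⟩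
    · simpa [Matrix.mulVec_add] using (hade t).add (hbde t)
    · have h := hat.add hbt; rw [add_zero] at h; exact h
    · have h := hab.add hbb; rw [add_zero] at h; exact h
  zero_mem' := by
    refine ⟨fun t => ?_, tendsto_const_nhds, tendsto_const_nhds⟩
    simpa [Matrix.mulVec_zero] using hasDerivAt_const t (0 : Fin m → ℝ)
  smul_mem' := by
    rintro c a ⟨hade, hat, hab⟩
    refine ⟨fun t => ?_, ?_, ?_⟩
    · simpa [Matrix.mulVec_smul] using (hade t).const_smul c
    · have h := hat.const_smul c; rw [smul_zero] at h; exact h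
    · have h := hab.const_smul c; rw [smul_zero] at h; exact h

/-- A real matrix is hyperbolic if no eigenvalue of its complexification is purely imaginary. -/
def IsHyperbolic {d : ℕ} (T : Matrix (Fin d) (Fin d) ℝ) : Prop :=
  ∀ μ : ℂ, Module.End.HasEigenvalue (Matrix.toLin' (T.map Complex.ofReal)) μ → μ.re ≠ 0

/-- The stable subspace `E^s(τ)` of `z' = S(t) z`, via the fundamental solutions `γ τ`. -/
def stableSubmodule {m : ℕ} (γ : ℝ → ℝ → Matrix (Fin m) (Fin m) ℝ) (τ : ℝ) :
    Submodule ℝ (Fin m → ℝ) where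
  carrier := {v | Tendsto (fun t => γ τ t *ᵥ v) atTop (nhds 0)}
  add_mem' := by
    intro a b ha hb
    simpa [Matrix.mulVec_add] using ha.add hb
  zero_mem' := by
    simpa [Matrix.mulVec_zero] using
      (tendsto_const_nhds : Tendsto (fun _ : ℝ => (0 : Fin m → ℝ)) atTop (nhds 0))
  smul_mem' := by
    intro c a ha
    simpa [Matrix.mulVec_smul] using ha.const_smul c

/-- The unstable subspace `E^u(τ)` of `z' = S(t) z`. -/
def unstableSubmodule {m : ℕ} (γ : ℝ → ℝ → Matrix (Fin m) (Fin m) ℝ) (τ : ℝ) :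
    Submodule ℝ (Fin m → ℝ) where
  carrier := {v | Tendsto (fun t => γ τ t *ᵥ v) atBot (nhds 0)}
  add_mem' := by
    intro a b ha hb
    simpa [Matrix.mulVec_add] using ha.add hb
  zero_mem' := by
    simpa [Matrix.mulVec_zero] using
      (tendsto_const_nhds : Tendsto (fun _ : ℝ => (0 : Fin m → ℝ)) atBot (nhds 0))
  smul_mem' := by
    intro c a ha
    simpa [Matrix.mulVec_smul] using ha.const_smul c

noncomputable def mulVecCLM (m : ℕ) : Matrix (Fin m) (Fin m) ℝ →ₗ[ℝ] ((Fin m → ℝ) →L[ℝ] (Fin m → ℝ)) where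
  toFun M := LinearMap.toContinuousLinearMap M.mulVecLin
  map_add' M N := by ext x i; simp [Matrix.add_mulVec]
  map_smul' c M := by ext x i; simp [Matrix.smul_mulVec]

lemma ode_uniq {m : ℕ} {S : ℝ → Matrix (Fin m) (Fin m) ℝ} (hS : Continuous S)
    {a b τ : ℝ} (hτ : τ ∈ Set.Icc a b) {f g : ℝ → Fin m → ℝ}
    (hf : ∀ t ∈ Set.Icc a b, HasDerivWithinAt f (S t *ᵥ f t) (Set.Icc a b) t)
    (hg : ∀ t ∈ Set.Icc a b, HasDerivWithinAt g (S t *ᵥ g t) (Set.Icc a b) t)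
    (heq : f τ = g τ) : Set.EqOn f g (Set.Icc a b) := by
  have hab : a ≤ b := hτ.1.trans hτ.2
  -- clamp
  set c : ℝ → ℝ := fun t => max a (min t b) with hc
  have hcmem : ∀ t, c t ∈ Set.Icc a b := fun t => ⟨le_max_left _ _,
    max_le hab (min_le_right _ _)⟩
  have hceq : ∀ t ∈ Set.Icc a b, c t = t := fun t ht => by
    simp [hc, min_eq_left ht.2, max_eq_right ht.1]
  have hccont : Continuous c := continuous_const.max (continuous_id.min continuous_const)
  -- Lipschitz bound
  obtain ⟨t0, -, hK⟩ := (isCompact_Icc (a := a) (b := b)).exists_isMaxOn ⟨a, le_refl a, hab⟩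
    ((continuous_nnnorm.comp ((mulVecCLM m).continuous_of_finiteDimensional.comp hS)).continuousOn)
  set K : NNReal := ‖mulVecCLM m (S t0)‖₊ with hKdef
  replace hK : ∀ x ∈ Set.Icc a b, ‖mulVecCLM m (S x)‖₊ ≤ K := fun x hx => hK hx
  set v : ℝ → (Fin m → ℝ) → (Fin m → ℝ) := fun t x => mulVecCLM m (S (c t)) x with hv
  have hlip : ∀ t, LipschitzOnWith K (v t) Set.univ := fun t =>
    (((mulVecCLM m (S (c t))).lipschitz).weaken (hK _ (hcmem t))).lipschitzOnWith
  have hveq : ∀ t ∈ Set.Icc a b, ∀ x, v t x = S t *ᵥ x := fun t ht x => by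
    simp [hv, hceq t ht, mulVecCLM]
  -- nhdsWithin facts
  have hmemR : ∀ u ∈ Set.Ico a b, Set.Icc a b ∈ nhdsWithin u (Set.Ici u) := by
    intro u hu
    refine Filter.mem_of_superset
      (Filter.inter_mem self_mem_nhdsWithin (nhdsWithin_le_nhds (Iic_mem_nhds hu.2))) ?_
    rintro x ⟨hx1, hx2⟩; exact ⟨hu.1.trans hx1, hx2⟩
  have hmemL : ∀ u ∈ Set.Ioc a b, Set.Icc a b ∈ nhdsWithin u (Set.Iic u) := by
    intro u hu
    refine Filter.mem_of_superset
      (Filter.inter_mem self_mem_nhdsWithin (nhdsWithin_le_nhds (Ici_mem_nhds hu.1))) ?_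
    rintro x ⟨hx1, hx2⟩; exact ⟨hx2, hx1.trans hu.2⟩
  have hfc : ContinuousOn f (Set.Icc a b) := fun t ht => (hf t ht).continuousWithinAt
  have hgc : ContinuousOn g (Set.Icc a b) := fun t ht => (hg t ht).continuousWithinAt
  intro t ht
  rcases le_total τ t with h | h
  · have hsub : Set.Icc τ b ⊆ Set.Icc a b := Set.Icc_subset_Icc_left hτ.1
    have hsub2 : Set.Ico τ b ⊆ Set.Icc a b := fun x hx => ⟨hτ.1.trans hx.1, hx.2.le⟩
    refine ODE_solution_unique_of_mem_Icc_right (v := v) (s := fun _ => Set.univ)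
      (fun t _ => hlip t) (hfc.mono hsub) ?_ (fun _ _ => Set.mem_univ _)
      (hgc.mono hsub) ?_ (fun _ _ => Set.mem_univ _) heq ⟨h, ht.2⟩
    · intro u hu
      rw [hveq u (hsub2 hu)]
      exact (hf u (hsub2 hu)).mono_of_mem_nhdsWithin (hmemR u ⟨(hsub2 hu).1, hu.2⟩)
    · intro u hu
      rw [hveq u (hsub2 hu)]
      exact (hg u (hsub2 hu)).mono_of_mem_nhdsWithin (hmemR u ⟨(hsub2 hu).1, hu.2⟩)
  · have hsub : Set.Icc a τ ⊆ Set.Icc a b := Set.Icc_subset_Icc_right hτ.2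
    have hsub2 : Set.Ioc a τ ⊆ Set.Icc a b := fun x hx => ⟨hx.1.le, hx.2.trans hτ.2⟩
    refine ODE_solution_unique_of_mem_Icc_left (v := v) (s := fun _ => Set.univ)
      (fun t _ => hlip t) (hfc.mono hsub) ?_ (fun _ _ => Set.mem_univ _)
      (hgc.mono hsub) ?_ (fun _ _ => Set.mem_univ _) heq ⟨ht.1, h⟩
    · intro u hu
      rw [hveq u (hsub2 hu)]
      exact (hf u (hsub2 hu)).mono_of_mem_nhdsWithin (hmemL u ⟨hu.1, (hsub2 hu).2⟩)
    · intro u hu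
      rw [hveq u (hsub2 hu)]
      exact (hg u (hsub2 hu)).mono_of_mem_nhdsWithin (hmemL u ⟨hu.1, (hsub2 hu).2⟩)

lemma ode_uniq_global {m : ℕ} {S : ℝ → Matrix (Fin m) (Fin m) ℝ} (hS : Continuous S)
    {τ : ℝ} {f g : ℝ → Fin m → ℝ}
    (hf : ∀ t, HasDerivAt f (S t *ᵥ f t) t)
    (hg : ∀ t, HasDerivAt g (S t *ᵥ g t) t)
    (heq : f τ = g τ) : f = g := by
  funext t
  have h1 : τ ∈ Set.Icc (min τ t) (max τ t) := ⟨min_le_left _ _, le_max_left _ _⟩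
  have h2 : t ∈ Set.Icc (min τ t) (max τ t) := ⟨min_le_right _ _, le_max_right _ _⟩
  exact ode_uniq hS h1 (fun u _ => (hf u).hasDerivWithinAt)
    (fun u _ => (hg u).hasDerivWithinAt) heq h2

/-- Under hypothesis (H1), for any `t₁ < t₂`, the space of solutions of `z' = S(t)z` on
`[t₁,t₂]` with `z(t₁) ∈ E^u(t₁)`, `z(t₂) ∈ E^s(t₂)` has the same dimension as the space of
solutions on the whole line decaying at `±∞`; both dimensions equal
`dim (E^u(0) ∩ E^s(0))`. -/
theorem stmt13 (n : ℕ) (S : ℝ → Matrix (Fin (2*n)) (Fin (2*n)) ℝ) (hScont : Continuous S)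
    (Splus Sminus : Matrix (Fin (2*n)) (Fin (2*n)) ℝ)
    (hplus : IsHyperbolic Splus) (hminus : IsHyperbolic Sminus)
    (hlimplus : Tendsto S atTop (nhds Splus))
    (hlimminus : Tendsto S atBot (nhds Sminus))
    (γ : ℝ → ℝ → Matrix (Fin (2*n)) (Fin (2*n)) ℝ)
    (hinit : ∀ τ, γ τ τ = 1)
    (hode : ∀ (τ : ℝ) (v : Fin (2*n) → ℝ) (t : ℝ),
      HasDerivAt (fun s => γ τ s *ᵥ v) (S t *ᵥ (γ τ t *ᵥ v)) t) :
    ∀ t₁ t₂ : ℝ, t₁ < t₂ →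
      Module.finrank ℝ
          ↥(bvpSolutions S t₁ t₂ (unstableSubmodule γ t₁) (stableSubmodule γ t₂)) =
        Module.finrank ℝ ↥(lineSolutions S) ∧
      Module.finrank ℝ ↥(lineSolutions S) =
        Module.finrank ℝ ↥(unstableSubmodule γ 0 ⊓ stableSubmodule γ 0) := by

  intro t₁ t₂ ht
  have hlt := ht.le
  -- cocycle identity
  have hco : ∀ τ σ (v : Fin (2*n) → ℝ) t, γ σ t *ᵥ (γ τ σ *ᵥ v) = γ τ t *ᵥ v := by
    intro τ σ v t
    have := ode_uniq_global (τ := σ) hScont (hode σ (γ τ σ *ᵥ v)) (hode τ v)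
      (by rw [hinit σ, Matrix.one_mulVec])
    exact congrFun this t
  have hinv : ∀ τ σ (v : Fin (2*n) → ℝ), γ σ τ *ᵥ (γ τ σ *ᵥ v) = v := by
    intro τ σ v
    rw [hco τ σ v τ, hinit τ, Matrix.one_mulVec]
  -- transfer of stable/unstable spaces
  have hstab : ∀ τ σ (v : Fin (2*n) → ℝ), v ∈ stableSubmodule γ τ →
      γ τ σ *ᵥ v ∈ stableSubmodule γ σ := by
    intro τ σ v hv
    show Tendsto (fun t => γ σ t *ᵥ (γ τ σ *ᵥ v)) atTop (nhds 0)
    simpa only [hco] using (show Tendsto (fun t => γ τ t *ᵥ v) atTop (nhds 0) from hv)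
  have hunst : ∀ τ σ (v : Fin (2*n) → ℝ), v ∈ unstableSubmodule γ τ →
      γ τ σ *ᵥ v ∈ unstableSubmodule γ σ := by
    intro τ σ v hv
    show Tendsto (fun t => γ σ t *ᵥ (γ τ σ *ᵥ v)) atBot (nhds 0)
    simpa only [hco] using (show Tendsto (fun t => γ τ t *ᵥ v) atBot (nhds 0) from hv)
  -- any line solution is given by γ 0
  have hlinerep : ∀ z ∈ lineSolutions S, z = fun t => γ 0 t *ᵥ z 0 := by
    intro z hz
    exact ode_uniq_global (τ := 0) hScont hz.1 (hode 0 (z 0))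
      (by rw [hinit 0, Matrix.one_mulVec])
  -- equivalence: line solutions ≃ E^u(0) ⊓ E^s(0)
  have e1 : ↥(lineSolutions S) ≃ₗ[ℝ]
      ↥(unstableSubmodule γ 0 ⊓ stableSubmodule γ 0) :=
    { toFun := fun z => ⟨z.1 0, by
        obtain ⟨zde, zt, zb⟩ := z.2
        have hz := hlinerep z.1 z.2
        constructor
        · show Tendsto (fun t => γ 0 t *ᵥ z.1 0) atBot (nhds 0)
          rw [← hz]; exact zb
        · show Tendsto (fun t => γ 0 t *ᵥ z.1 0) atTop (nhds 0)
          rw [← hz]; exact zt⟩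
      map_add' := fun a b => rfl
      map_smul' := fun c a => rfl
      invFun := fun v => ⟨fun t => γ 0 t *ᵥ v.1, fun t => hode 0 v.1 t, v.2.2, v.2.1⟩
      left_inv := fun z => Subtype.ext (hlinerep z.1 z.2).symm
      right_inv := fun v => Subtype.ext (by simp [hinit 0, Matrix.one_mulVec]) }
  -- any BVP extension is given by γ t₁ on the interval
  have hbvprep : ∀ Z : ℝ → Fin (2*n) → ℝ,
      (∀ t ∈ Set.Icc t₁ t₂, HasDerivWithinAt Z (S t *ᵥ Z t) (Set.Icc t₁ t₂) t) →
      Set.EqOn Z (fun t => γ t₁ t *ᵥ Z t₁) (Set.Icc t₁ t₂) := by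
    intro Z hZ
    exact ode_uniq hScont ⟨le_refl t₁, hlt⟩ hZ
      (fun t _ => (hode t₁ (Z t₁) t).hasDerivWithinAt)
      (by rw [hinit t₁, Matrix.one_mulVec])
  have ht₁ : t₁ ∈ Set.Icc t₁ t₂ := ⟨le_refl t₁, hlt⟩
  -- equivalence: BVP solutions ≃ E^u(0) ⊓ E^s(0)
  have e2 : ↥(bvpSolutions S t₁ t₂ (unstableSubmodule γ t₁) (stableSubmodule γ t₂)) ≃ₗ[ℝ]
      ↥(unstableSubmodule γ 0 ⊓ stableSubmodule γ 0) :=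
    { toFun := fun z => ⟨γ t₁ 0 *ᵥ z.1 ⟨t₁, ht₁⟩, by
        obtain ⟨Z, hZeq, hZde, hZ1, hZ2⟩ := z.2
        have hZt₁ : Z t₁ = z.1 ⟨t₁, ht₁⟩ := hZeq ⟨t₁, ht₁⟩
        rw [← hZt₁]
        have hE := hbvprep Z hZde
        constructor
        · exact hunst t₁ 0 _ hZ1
        · have h2 : Z t₂ = γ t₁ t₂ *ᵥ Z t₁ := hE ⟨hlt, le_refl t₂⟩
          have := hstab t₂ 0 _ hZ2
          rw [h2, hco t₁ t₂ (Z t₁) 0] at this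
          exact this⟩
      map_add' := fun a b => Subtype.ext (by
        show γ t₁ 0 *ᵥ ((a.1 + b.1) ⟨t₁, ht₁⟩) = _
        simp [Matrix.mulVec_add])
      map_smul' := fun c a => Subtype.ext (by
        show γ t₁ 0 *ᵥ ((c • a.1) ⟨t₁, ht₁⟩) = _
        simp [Matrix.mulVec_smul])
      invFun := fun v => ⟨fun s => γ t₁ s.1 *ᵥ (γ 0 t₁ *ᵥ v.1), by
        refine ⟨fun t => γ t₁ t *ᵥ (γ 0 t₁ *ᵥ v.1), fun s => rfl,
          fun t _ => (hode t₁ _ t).hasDerivWithinAt, ?_, ?_⟩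
        · show γ t₁ t₁ *ᵥ (γ 0 t₁ *ᵥ v.1) ∈ unstableSubmodule γ t₁
          rw [hinit t₁, Matrix.one_mulVec]
          exact hunst 0 t₁ _ v.2.1
        · show γ t₁ t₂ *ᵥ (γ 0 t₁ *ᵥ v.1) ∈ stableSubmodule γ t₂
          rw [hco 0 t₁ v.1 t₂]
          exact hstab 0 t₂ _ v.2.2⟩
      left_inv := fun z => Subtype.ext (by
        obtain ⟨Z, hZeq, hZde, hZ1, hZ2⟩ := z.2
        have hZt₁ : Z t₁ = z.1 ⟨t₁, ht₁⟩ := hZeq ⟨t₁, ht₁⟩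
        have hE := hbvprep Z hZde
        funext s
        show γ t₁ s.1 *ᵥ (γ 0 t₁ *ᵥ (γ t₁ 0 *ᵥ z.1 ⟨t₁, ht₁⟩)) = z.1 s
        rw [hinv t₁ 0, ← hZt₁]
        exact ((hE s.2).symm.trans (hZeq s)))
      right_inv := fun v => Subtype.ext (by
        show γ t₁ 0 *ᵥ (γ t₁ t₁ *ᵥ (γ 0 t₁ *ᵥ v.1)) = v.1
        rw [hinit t₁, Matrix.one_mulVec, hinv 0 t₁]) }
  exact ⟨(e2.trans e1.symm).finrank_eq, e1.finrank_eq⟩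
end
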